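/- arXiv:1801.09716 — 2 statements merged into one kernel-verified Lean document; each statement's English description precedes it below -/
import Mathlib

section
/- Let S be an isometry on a complex Hilbert space H. Then H^iso and H^uni are both S-reducing closed subspaces of H, they are mutually orthogonal, and H = H^iso ⊕ H^uni as a Hilbert (orthogonal) direct sum. -/
open ContinuousLinearMap

open scoped InnerProductSpace

variable {H : Type*} [NormedAddCommGroup H] [InnerProductSpace ℂ H] [CompleteSpace H]

/-- The purely isometric part `H^iso`: the closed linear span of the subspaces
`S^k (ker S*)`, `k ≥ 0`. -/
noncomputable def Hiso (S : H →L[ℂ] H) : Submodule ℂ H :=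
  (⨆ k : ℕ, Submodule.map ((S ^ k : H →L[ℂ] H) : H →ₗ[ℂ] H) (LinearMap.ker (adjoint S : H →ₗ[ℂ] H))).topologicalClosure

/-- The unitary part `H^uni := ⋂_{k≥0} S^k (H)`. -/
noncomputable def Huni (S : H →L[ℂ] H) : Submodule ℂ H :=
  ⨅ k : ℕ, LinearMap.range ((S ^ k : H →L[ℂ] H) : H →ₗ[ℂ] H)

/-- A closed subspace `L` reduces `S` if it is invariant under `S` and `S*`. -/
def Reduces (S : H →L[ℂ] H) (L : Submodule ℂ H) : Prop :=
  (∀ x ∈ L, S x ∈ L) ∧ ∀ x ∈ L, adjoint S x ∈ L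

/-- `S` is unitary on `L`: `S` maps `L` onto `L`. -/
def UnitaryOn (S : H →L[ℂ] H) (L : Submodule ℂ H) : Prop :=
  Submodule.map (S : H →ₗ[ℂ] H) L = L

/-- `S` is a pure isometry on the `S`-invariant subspace `L`: `{0}` is the only
`S`-invariant closed subspace of `L` on which `S` is unitary. -/
def PureOn (S : H →L[ℂ] H) (L : Submodule ℂ H) : Prop :=
  ∀ M : Submodule ℂ H, IsClosed (M : Set H) → M ≤ L → Submodule.map (S : H →ₗ[ℂ] H) M = M → M = ⊥

/-- `P` is the orthogonal projection of `H` onto the subspace `K`. -/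
def IsOrthoProj (P : H →L[ℂ] H) (K : Submodule ℂ H) : Prop :=
  ∀ x, P x ∈ K ∧ x - P x ∈ Kᗮ

-- general: orthogonal complement of a reducing subspace reduces
lemma reduces_orthogonal (S : H →L[ℂ] H) {L : Submodule ℂ H} (h : Reduces S L) :
    Reduces S Lᗮ := by
  constructor
  · intro x hx
    rw [Submodule.mem_orthogonal]
    intro u hu
    rw [← adjoint_inner_left]
    exact hx _ (h.2 u hu)
  · intro x hx
    rw [Submodule.mem_orthogonal]
    intro u hu
    rw [adjoint_inner_right]
    exact hx _ (h.1 u hu)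

theorem statement0 (S : H →L[ℂ] H) (hS : adjoint S * S = 1) :
    IsClosed ((Hiso S : Set H)) ∧ IsClosed ((Huni S : Set H)) ∧
    Reduces S (Hiso S) ∧ Reduces S (Huni S) ∧
    Hiso S ≤ (Huni S)ᗮ ∧ Hiso S ⊔ Huni S = ⊤ := by
  set M : Submodule ℂ H := ⨆ k : ℕ, Submodule.map ((S ^ k : H →L[ℂ] H) : H →ₗ[ℂ] H) (LinearMap.ker (adjoint S : H →ₗ[ℂ] H)) with hM
  have h1 : ∀ y, adjoint S (S y) = y := by
    intro y
    have := congrArg (fun T : H →L[ℂ] H => T y) hS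
    simpa using this
  have hinner : ∀ x y : H, ⟪S x, S y⟫_ℂ = ⟪x, y⟫_ℂ := by
    intro x y; rw [← adjoint_inner_left, h1]
  have hnorm : ∀ x : H, ‖S x‖ = ‖x‖ := by
    intro x; rw [norm_eq_sqrt_re_inner (𝕜 := ℂ), norm_eq_sqrt_re_inner (𝕜 := ℂ) x, hinner]
  have hadj : ∀ k : ℕ, adjoint (S ^ k) = (adjoint S) ^ k := by
    intro k; rw [← star_eq_adjoint, ← star_eq_adjoint, star_pow]
  have hcan : ∀ (k : ℕ) (y : H), ((adjoint S) ^ k) ((S ^ k) y) = y := by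
    intro k
    induction k with
    | zero => intro y; simp
    | succ n ih =>
      intro y
      rw [pow_succ S n, pow_succ' (adjoint S) n]
      simp only [ContinuousLinearMap.mul_apply]
      rw [ih, h1]
  -- range S is closed
  have hrange : IsClosed ((LinearMap.range (S : H →ₗ[ℂ] H) : Submodule ℂ H) : Set H) := by
    have hIso : Isometry S := AddMonoidHomClass.isometry_of_norm S hnorm
    simpa [LinearMap.coe_range] using hIso.isClosedEmbedding.isClosed_range
  -- (ker S†)ᗮ = range S
  have hker : LinearMap.ker (adjoint S : H →ₗ[ℂ] H) = (LinearMap.range (S : H →ₗ[ℂ] H))ᗮ := by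
    ext x
    rw [LinearMap.mem_ker, Submodule.mem_orthogonal]
    constructor
    · rintro hx u ⟨y, rfl⟩
      simp only [ContinuousLinearMap.coe_coe] at hx ⊢; rw [← adjoint_inner_right, hx, inner_zero_right]
    · intro hx
      have := hx (S (adjoint S x)) ⟨adjoint S x, rfl⟩
      rw [← adjoint_inner_right] at this
      exact inner_self_eq_zero.mp this
  have hkero : (LinearMap.ker (adjoint S : H →ₗ[ℂ] H))ᗮ = LinearMap.range (S : H →ₗ[ℂ] H) := by
    rw [hker, Submodule.orthogonal_orthogonal_eq_closure,
      IsClosed.submodule_topologicalClosure_eq hrange]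
  -- Huni = Mᗮ
  have huni_orth : Huni S = Mᗮ := by
    rw [hM, ← Submodule.iInf_orthogonal]
    ext x
    simp only [Huni, Submodule.mem_iInf]
    have key : ∀ k : ℕ, x ∈ (Submodule.map ((S ^ k : H →L[ℂ] H) : H →ₗ[ℂ] H) (LinearMap.ker (adjoint S : H →ₗ[ℂ] H)))ᗮ ↔
        ((adjoint S) ^ k) x ∈ LinearMap.range (S : H →ₗ[ℂ] H) := by
      intro k
      rw [← hkero, Submodule.mem_orthogonal, Submodule.mem_orthogonal]
      constructor
      · intro hx w hw
        have := hx ((S ^ k) w) ⟨w, hw, rfl⟩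
        rw [← hadj, adjoint_inner_right]
        exact this
      · rintro hx u ⟨w, hw, rfl⟩
        have := hx w hw
        rw [ContinuousLinearMap.coe_coe, ← adjoint_inner_right, hadj]
        exact this
    constructor
    · intro hx k
      rw [key]
      obtain ⟨y, hy⟩ := hx (k + 1)
      have h2 : (S ^ (k + 1)) y = (S ^ k) (S y) := by rw [pow_succ]; rfl
      have hv : ((adjoint S) ^ k) x = S y := by rw [← hy, ContinuousLinearMap.coe_coe, h2, hcan]
      exact ⟨y, hv.symm⟩
    · intro hx k
      induction k with
      | zero => exact ⟨x, by simp⟩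
      | succ n ih =>
        obtain ⟨y, hy⟩ := ih
        have hr : ((adjoint S) ^ n) x ∈ LinearMap.range (S : H →ₗ[ℂ] H) := (key n).mp (hx n)
        rw [← hy, ContinuousLinearMap.coe_coe, hcan] at hr
        obtain ⟨z, rfl⟩ := hr
        refine ⟨z, ?_⟩
        rw [pow_succ, ← hy]; rfl
  -- M is invariant under S
  have hmapS : Submodule.map (S : H →ₗ[ℂ] H) M ≤ M := by
    conv_rhs => rw [hM]
    rw [hM, Submodule.map_iSup]
    refine iSup_le fun k => le_trans ?_ (le_iSup _ (k + 1))
    rintro u ⟨v, ⟨w, hw, rfl⟩, rfl⟩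
    exact ⟨w, hw, by rw [pow_succ']; rfl⟩
  -- M is invariant under S†
  have hmapSa : Submodule.map (adjoint S : H →ₗ[ℂ] H) M ≤ M := by
    conv_rhs => rw [hM]
    rw [hM, Submodule.map_iSup]
    refine iSup_le fun k => ?_
    match k with
    | 0 =>
      rintro u ⟨v, ⟨w, hw, rfl⟩, rfl⟩
      have : adjoint S ((S ^ 0) w) = 0 := by
        simpa [LinearMap.mem_ker] using hw
      simp only [ContinuousLinearMap.coe_coe]; rw [this]
      exact Submodule.zero_mem _
    | (n + 1) =>
      rintro u ⟨v, ⟨w, hw, rfl⟩, rfl⟩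
      refine le_iSup (fun k => Submodule.map ((S ^ k : H →L[ℂ] H) : H →ₗ[ℂ] H) (LinearMap.ker (adjoint S : H →ₗ[ℂ] H))) n ?_
      refine ⟨w, hw, ?_⟩
      have h2 : (S ^ (n + 1)) w = S ((S ^ n) w) := by rw [pow_succ']; rfl
      simp only [ContinuousLinearMap.coe_coe]; rw [h2, h1]
  have hiso_cl : (Hiso S : Set H) = closure (M : Set H) := rfl
  have hred_iso : Reduces S (Hiso S) := by
    constructor
    · intro x hx
      have hx' : x ∈ closure (M : Set H) := hx
      have : S x ∈ closure (M : Set H) :=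
        map_mem_closure S.continuous hx' (fun y hy => hmapS ⟨y, hy, rfl⟩)
      exact this
    · intro x hx
      have hx' : x ∈ closure (M : Set H) := hx
      have : adjoint S x ∈ closure (M : Set H) :=
        map_mem_closure (adjoint S).continuous hx' (fun y hy => hmapSa ⟨y, hy, rfl⟩)
      exact this
  have huni_eq : Huni S = (Hiso S)ᗮ := by
    rw [huni_orth]
    have : Hiso S = Mᗮᗮ := (Submodule.orthogonal_orthogonal_eq_closure M).symm
    rw [this, Submodule.orthogonal_orthogonal_eq_closure,
      IsClosed.submodule_topologicalClosure_eq (Submodule.isClosed_orthogonal M)]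
  have hiso_closed : IsClosed ((Hiso S : Set H)) :=
    Submodule.isClosed_topologicalClosure _
  refine ⟨hiso_closed, ?_, hred_iso, ?_, ?_, ?_⟩
  · rw [huni_eq]; exact Submodule.isClosed_orthogonal _
  · rw [huni_eq]; exact reduces_orthogonal S hred_iso
  · rw [huni_eq]; exact Submodule.le_orthogonal_orthogonal _
  · rw [huni_eq]
    haveI : CompleteSpace (Hiso S) := hiso_closed.completeSpace_coe
    exact Submodule.sup_orthogonal_of_hasOrthogonalProjection
end

section
/- Let (V_1,...,V_n) be an n-tuple of doubly non-commuting isometries on a complex Hilbert space H. Then: the 2n orthogonal projections P_1^iso,...,P_n^iso, P_1^uni,...,P_n^uni pairwise commute and commute with every V_i and every V_i*; for every A ⊆ {1,...,n}, H_A = ⋂_{i∈A} H_i^iso ∩ ⋂_{i∈A^c} H_i^uni; H = ⊕_{A ⊆ {1,...,n}} H_A is a Hilbert (orthogonal) direct sum whose 2^n summands H_A each reduce all V_1,...,V_n; and for every A and every i, the restriction of V_i to H_A is a pure isometry if i ∈ A and is unitary if i ∈ A^c. Furthermore, if L is a closed subspace of H that reduces all V_1,...,V_n and A ⊆ {1,...,n},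 then the following are equivalent: (1) V_i restricted to L is a pure isometry for all i ∈ A and is unitary for all i ∈ A^c; (2) L ⊆ H_A; (3) P_L ∘ P_A = P_L, where P_L is the orthogonal projection onto L. -/
open ContinuousLinearMap

variable {H : Type*} [NormedAddCommGroup H] [InnerProductSpace ℂ H] [CompleteSpace H]

/-- `(V 1, ..., V n)` is an `n`-tuple of doubly non-commuting isometries with structure
constants `z i j`: each `V i` is an isometry (`(V i)* (V i) = 1`) and
`(V i)* (V j) = conj (z i j) • (V j) (V i)*` for all `i ≠ j`. -/
def DoublyNonCommuting {n : ℕ} (z : Fin n → Fin n → ℂ) (V : Fin n → H →L[ℂ] H) : Prop :=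
  (∀ i, adjoint (V i) * V i = 1) ∧
    ∀ i j, i ≠ j →
      adjoint (V i) * V j = (starRingEnd ℂ) (z i j) • (V j * adjoint (V i))

/-- The space `H_A = ⋂_{i ∈ A} H_i^iso ∩ ⋂_{i ∈ Aᶜ} H_i^uni` (the range of the
projection `P_A`). -/
noncomputable def HA {n : ℕ} (V : Fin n → H →L[ℂ] H) (A : Finset (Fin n)) : Submodule ℂ H :=
  (⨅ i ∈ A, Hiso (V i)) ⊓ ⨅ i ∈ Aᶜ, Huni (V i)

/-- The projection `P_A = (∏_{i ∈ A} P_i^iso) (∏_{i ∈ Aᶜ} P_i^uni)`, the factors being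
taken in increasing order of the indices (the order is immaterial by the theorem). -/
noncomputable def PA {n : ℕ} (Piso Puni : Fin n → H →L[ℂ] H) (A : Finset (Fin n)) :
    H →L[ℂ] H :=
  ((A.sort (· ≤ ·)).map Piso).prod * ((Aᶜ.sort (· ≤ ·)).map Puni).prod


set_option linter.unusedSectionVars false
set_option maxHeartbeats 1000000
local notation "⟪" x ", " y "⟫" => @inner ℂ _ _ x y


namespace IsOrthoProj
variable {P Q : H →L[ℂ] H} {K M : Submodule ℂ H}

lemma mem (hP : IsOrthoProj P K) (x : H) : P x ∈ K := (hP x).1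

lemma fix (hP : IsOrthoProj P K) {x : H} (hx : x ∈ K) : P x = x := by
  have hxk : x - P x ∈ K := sub_mem hx (hP x).1
  have h0 : x - P x = 0 := by
    have := Submodule.mem_orthogonal _ _ |>.mp (hP x).2 _ hxk
    simpa [inner_self_eq_zero] using this
  have := sub_eq_zero.mp h0
  exact this.symm

lemma kill (hP : IsOrthoProj P K) {x : H} (hx : x ∈ Kᗮ) : P x = 0 := by
  have h1 : P x ∈ Kᗮ := by
    have : P x = x - (x - P x) := by abel
    rw [this]; exact sub_mem hx (hP x).2
  have := Submodule.mem_orthogonal _ _ |>.mp h1 _ (hP x).1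
  simpa [inner_self_eq_zero] using this

lemma inner_eq (hP : IsOrthoProj P K) (x y : H) : ⟪P x, y⟫ = ⟪x, P y⟫ := by
  have h1 : ⟪P x, y - P y⟫ = 0 :=
    Submodule.mem_orthogonal _ _ |>.mp (hP y).2 _ (hP x).1
  have h2 : ⟪x - P x, P y⟫ = 0 := by
    have := Submodule.mem_orthogonal _ _ |>.mp (hP x).2 _ (hP y).1
    rw [← inner_conj_symm]
    simp [this]
  have e1 : ⟪P x, y⟫ = ⟪P x, P y⟫ := by
    have := inner_sub_right (𝕜 := ℂ) (P x) y (P y)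
    rw [h1] at this
    exact sub_eq_zero.mp this.symm
  have e2 : ⟪x, P y⟫ = ⟪P x, P y⟫ := by
    have := inner_sub_left (𝕜 := ℂ) x (P x) (P y)
    rw [h2] at this
    exact sub_eq_zero.mp this.symm
  rw [e1, e2]

lemma adjoint_eq (hP : IsOrthoProj P K) : adjoint P = P :=
  ((eq_adjoint_iff P P).mpr (hP.inner_eq)).symm

lemma range_eq (hP : IsOrthoProj P K) : LinearMap.range (P : H →ₗ[ℂ] H) = K := by
  ext x
  constructor
  · rintro ⟨y, rfl⟩; exact hP.mem y
  · intro hx; exact ⟨x, hP.fix hx⟩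

lemma unique (hP : IsOrthoProj P K) (hQ : IsOrthoProj Q K) : P = Q := by
  ext x
  have h1 : P x - Q x ∈ K := sub_mem (hP.mem x) (hQ.mem x)
  have h2 : P x - Q x ∈ Kᗮ := by
    have : P x - Q x = (x - Q x) - (x - P x) := by abel
    rw [this]; exact sub_mem (hQ x).2 (hP x).2
  have := Submodule.mem_orthogonal _ _ |>.mp h2 _ h1
  have h0 : P x - Q x = 0 := by simpa [inner_self_eq_zero] using this
  exact sub_eq_zero.mp h0

lemma one_sub (hP : IsOrthoProj P K) : IsOrthoProj (1 - P) Kᗮ := by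
  intro x
  constructor
  · simpa using (hP x).2
  · have : x - (1 - P) x = P x := by simp
    rw [this]
    exact K.le_orthogonal_orthogonal (hP.mem x)

lemma top : IsOrthoProj (1 : H →L[ℂ] H) (⊤ : Submodule ℂ H) := by
  intro x; simp

/-- product of commuting orthogonal projections projects onto the intersection -/
lemma mul (hP : IsOrthoProj P K) (hQ : IsOrthoProj Q M) (hc : Commute P Q) :
    IsOrthoProj (P * Q) (K ⊓ M) := by
  intro x
  refine ⟨Submodule.mem_inf.mpr ⟨hP.mem _, ?_⟩, ?_⟩
  · have : (P * Q) x = (Q * P) x := by rw [hc.eq]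
    rw [this]; exact hQ.mem _
  · rw [Submodule.mem_orthogonal]
    intro u hu
    rcases Submodule.mem_inf.mp hu with ⟨huK, huM⟩
    have : ⟪u, x - (P * Q) x⟫ = ⟪u, x⟫ - ⟪u, P (Q x)⟫ := by
      rw [inner_sub_right]; rfl
    rw [this]
    have h1 : ⟪u, P (Q x)⟫ = ⟪P u, Q x⟫ := (hP.inner_eq u (Q x)).symm
    rw [h1, hP.fix huK, ← hQ.inner_eq u x, hQ.fix huM, sub_self]

/-- general commutation: if `T` and `T*` preserve `K` then `P` commutes with `T` -/
lemma commute (hP : IsOrthoProj P K) {T : H →L[ℂ] H}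
    (hT : ∀ x ∈ K, T x ∈ K) (hT' : ∀ x ∈ K, adjoint T x ∈ K) : Commute P T := by
  ext x
  have hq : x - P x ∈ Kᗮ := (hP x).2
  have hTq : T (x - P x) ∈ Kᗮ := by
    rw [Submodule.mem_orthogonal]
    intro u hu
    have : ⟪u, T (x - P x)⟫ = ⟪adjoint T u, x - P x⟫ := by
      rw [adjoint_inner_left]
    rw [this]
    exact Submodule.mem_orthogonal _ _ |>.mp hq _ (hT' u hu)
  have hκ : T x = T (P x) + T (x - P x) := by rw [← map_add]; congr 1; abel
  show P (T x) = T (P x)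
  rw [hκ, map_add, hP.kill hTq, add_zero, hP.fix (hT _ (hP.mem x))]

end IsOrthoProj


section Iso
variable {S : H →L[ℂ] H} (hS : adjoint S * S = 1)

lemma adjoint_pow (T : H →L[ℂ] H) (k : ℕ) : adjoint (T ^ k) = (adjoint T) ^ k := by
  rw [← star_eq_adjoint, ← star_eq_adjoint, star_pow]

include hS

lemma pow_isometry (k : ℕ) : adjoint (S ^ k) * S ^ k = 1 := by
  induction k with
  | zero => simp [← star_eq_adjoint]
  | succ k ih =>
    rw [pow_succ, ← star_eq_adjoint, star_mul, star_eq_adjoint, star_eq_adjoint]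
    calc adjoint S * adjoint (S ^ k) * (S ^ k * S)
        = adjoint S * (adjoint (S ^ k) * S ^ k) * S := by noncomm_ring
      _ = 1 := by rw [ih, mul_one, hS]

lemma adj_pow_apply (k : ℕ) (y : H) : adjoint (S ^ k) ((S ^ k) y) = y := by
  have := congrArg (fun T => T y) (pow_isometry hS k)
  simpa using this

lemma norm_pow_apply (k : ℕ) (x : H) : ‖(S ^ k) x‖ = ‖x‖ := by
  have h : ⟪(S ^ k) x, (S ^ k) x⟫ = ⟪x, x⟫ := by
    rw [← adjoint_inner_left, adj_pow_apply hS]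
  have h1 := @inner_self_eq_norm_sq ℂ _ _ _ _ ((S ^ k) x)
  have h2 := @inner_self_eq_norm_sq ℂ _ _ _ _ x
  have : ‖(S ^ k) x‖ ^ 2 = ‖x‖ ^ 2 := by
    rw [← h1, ← h2, h]
  nlinarith [norm_nonneg ((S ^ k) x), norm_nonneg x]

lemma range_pow_closed (k : ℕ) : IsClosed ((LinearMap.range ((S ^ k : H →L[ℂ] H) : H →ₗ[ℂ] H) : Submodule ℂ H) : Set H) := by
  have hiso : Isometry (S ^ k) := AddMonoidHomClass.isometry_of_norm _ (norm_pow_apply hS k)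
  have := hiso.isClosedEmbedding.isClosed_range
  rw [LinearMap.coe_range]; exact this

omit hS in
/-- `T* T = 0` implies `T = 0`. -/
lemma eq_zero_of_adjoint_mul_self (T : H →L[ℂ] H) (h : adjoint T * T = 0) : T = 0 := by
  ext x
  have : ⟪T x, T x⟫ = 0 := by
    rw [← adjoint_inner_left]
    have := congrArg (fun A => A x) h
    simp only [ContinuousLinearMap.mul_apply, ContinuousLinearMap.zero_apply] at this
    rw [this, inner_zero_left]
  simpa [inner_self_eq_zero] using this

end Iso

lemma ker_adjoint_eq (S : H →L[ℂ] H) :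
    LinearMap.ker (adjoint S : H →ₗ[ℂ] H) = (LinearMap.range (S : H →ₗ[ℂ] H))ᗮ := by
  ext x
  simp only [LinearMap.mem_ker, Submodule.mem_orthogonal]
  constructor
  · rintro h u hu
    rcases hu with ⟨y, rfl⟩
    simp only [ContinuousLinearMap.coe_coe] at h ⊢; rw [← adjoint_inner_right, h, inner_zero_right]
  · intro h
    refine ext_inner_left ℂ (fun v => ?_)
    rw [ContinuousLinearMap.coe_coe, adjoint_inner_right, inner_zero_right]
    exact h _ ⟨v, rfl⟩

section Iso2
variable {S : H →L[ℂ] H} (hS : adjoint S * S = 1)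
include hS

lemma range_closed : IsClosed ((LinearMap.range (S : H →ₗ[ℂ] H) : Submodule ℂ H) : Set H) := by
  have := range_pow_closed hS 1
  simpa using this

lemma ker_adjoint_orth : (LinearMap.ker (adjoint S : H →ₗ[ℂ] H))ᗮ = LinearMap.range (S : H →ₗ[ℂ] H) := by
  rw [ker_adjoint_eq, Submodule.orthogonal_orthogonal_eq_closure,
    IsClosed.submodule_topologicalClosure_eq (range_closed hS)]

lemma mem_Huni {x : H} : x ∈ Huni S ↔ ∀ k : ℕ, ∃ y, (S ^ k) y = x := by
  simp [Huni, Submodule.mem_iInf, LinearMap.mem_range, Module.End.coe_pow]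

omit hS in
lemma huni_closed (S : H →L[ℂ] H) (h : ∀ k : ℕ,
    IsClosed ((LinearMap.range ((S ^ k : H →L[ℂ] H) : H →ₗ[ℂ] H) : Submodule ℂ H) : Set H)) :
    IsClosed ((Huni S : Set H)) := by
  have : (Huni S : Set H) = ⋂ k : ℕ, ((LinearMap.range ((S ^ k : H →L[ℂ] H) : H →ₗ[ℂ] H) : Submodule ℂ H) : Set H) := by
    simp [Huni, Submodule.coe_iInf]
  rw [this]
  exact isClosed_iInter h

lemma hiso_orth : (Hiso S)ᗮ = Huni S := by
  apply le_antisymm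
  · intro x hx
    have hk : ∀ k : ℕ, ∃ w, S w = adjoint (S ^ k) x := by
      intro k
      have hle : Submodule.map ((S ^ k : H →L[ℂ] H) : H →ₗ[ℂ] H) (LinearMap.ker (adjoint S : H →ₗ[ℂ] H)) ≤ Hiso S :=
        le_trans (le_iSup (fun k => Submodule.map ((S ^ k : H →L[ℂ] H) : H →ₗ[ℂ] H) (LinearMap.ker (adjoint S : H →ₗ[ℂ] H))) k) (Submodule.le_topologicalClosure _)
      have hxk : x ∈ (Submodule.map ((S ^ k : H →L[ℂ] H) : H →ₗ[ℂ] H) (LinearMap.ker (adjoint S : H →ₗ[ℂ] H)))ᗮ :=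
        Submodule.orthogonal_le hle hx
    
      have hmem : adjoint (S ^ k) x ∈ (LinearMap.ker (adjoint S : H →ₗ[ℂ] H))ᗮ := by
        rw [Submodule.mem_orthogonal]
        intro y hy
        rw [adjoint_inner_right]
        exact Submodule.mem_orthogonal _ _ |>.mp hxk _ ⟨y, hy, rfl⟩
      rw [ker_adjoint_orth hS] at hmem
      exact hmem
    rw [mem_Huni hS]
    intro k
    induction k with
    | zero => exact ⟨x, by simp⟩
    | succ k ih =>
      rcases ih with ⟨y, hy⟩
      rcases hk k with ⟨w, hw⟩
      refine ⟨w, ?_⟩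
      have : adjoint (S ^ k) x = y := by rw [← hy, adj_pow_apply hS]
      rw [pow_succ, ContinuousLinearMap.mul_apply, hw, this, hy]
  · intro x hx
    rw [Hiso, ← Submodule.orthogonal_orthogonal_eq_closure, Submodule.triorthogonal_eq_orthogonal,
      ← Submodule.iInf_orthogonal]
    rw [Submodule.mem_iInf]
    intro k
    rw [Submodule.mem_orthogonal]
    rintro u ⟨y, hy, rfl⟩
    rw [ContinuousLinearMap.coe_coe, ← adjoint_inner_right]
    rcases (mem_Huni hS).mp hx (k + 1) with ⟨w, rfl⟩
    have : adjoint (S ^ k) ((S ^ (k+1)) w) = S w := by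
      rw [pow_succ, ContinuousLinearMap.mul_apply, adj_pow_apply hS]
    rw [this, ← adjoint_inner_left, show adjoint S y = 0 from hy, inner_zero_left]

lemma huni_orth : (Huni S)ᗮ = Hiso S := by
  rw [← hiso_orth hS, Submodule.orthogonal_orthogonal_eq_closure]
  exact IsClosed.submodule_topologicalClosure_eq (Submodule.isClosed_topologicalClosure _)

end Iso2


section DNC
variable {n : ℕ} {z : Fin n → Fin n → ℂ} {V : Fin n → H →L[ℂ] H}
  (hz1 : ∀ i j, i ≠ j → ‖z i j‖ = 1)
  (hV : DoublyNonCommuting z V)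

include hz1 in
lemma z_mul_conj {i j : Fin n} (hij : i ≠ j) : z i j * (starRingEnd ℂ) (z i j) = 1 := by
  rw [Complex.mul_conj]
  norm_cast
  rw [Complex.normSq_eq_norm_sq, hz1 i j hij, one_pow]

include hz1 hV

/-- `V_j* V_i = z_ij • V_i V_j*` -/
lemma rel2 {i j : Fin n} (hij : i ≠ j) :
    adjoint (V j) * V i = z i j • (V i * adjoint (V j)) := by
  have h := hV.2 i j hij
  have := congrArg star h
  rw [star_mul, star_smul, star_mul] at this
  simp only [star_eq_adjoint, adjoint_adjoint] at this
  rw [this]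
  congr 1
  simp [Complex.star_def]

/-- `V_i V_j = z_ij • V_j V_i` -/
lemma rel3 {i j : Fin n} (hij : i ≠ j) :
    V i * V j = z i j • (V j * V i) := by
  set c := z i j with hc
  have hcc : c * (starRingEnd ℂ) c = 1 := z_mul_conj hz1 hij
  set T := V i * V j - c • (V j * V i) with hT
  have hTz : T = 0 := by
    apply eq_zero_of_adjoint_mul_self
    have hadj : adjoint T = adjoint (V j) * adjoint (V i)
        - (starRingEnd ℂ) c • (adjoint (V i) * adjoint (V j)) := by
      rw [hT, ← star_eq_adjoint, star_sub, star_smul, star_mul, star_mul]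
      simp only [star_eq_adjoint, Complex.star_def]
    rw [hadj, hT]
    rw [mul_sub, sub_mul, sub_mul, smul_mul_assoc, smul_mul_assoc, mul_smul_comm, mul_smul_comm,
      smul_smul]
    have t1 : adjoint (V j) * adjoint (V i) * (V i * V j) = 1 := by
      calc adjoint (V j) * adjoint (V i) * (V i * V j)
          = adjoint (V j) * (adjoint (V i) * V i) * V j := by noncomm_ring
        _ = 1 := by rw [hV.1 i, mul_one, hV.1 j]
    have t2 : adjoint (V j) * adjoint (V i) * (V j * V i) = (starRingEnd ℂ) c • 1 := by
      calc adjoint (V j) * adjoint (V i) * (V j * V i)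
          = adjoint (V j) * (adjoint (V i) * V j) * V i := by noncomm_ring
        _ = adjoint (V j) * ((starRingEnd ℂ) c • (V j * adjoint (V i))) * V i := by
            rw [hV.2 i j hij]
        _ = (starRingEnd ℂ) c • (adjoint (V j) * V j * (adjoint (V i) * V i)) := by
            rw [mul_smul_comm, smul_mul_assoc]; congr 1
        _ = (starRingEnd ℂ) c • 1 := by rw [hV.1 j, one_mul, hV.1 i]
    have t3 : adjoint (V i) * adjoint (V j) * (V i * V j) = c • 1 := by
      calc adjoint (V i) * adjoint (V j) * (V i * V j)
          = adjoint (V i) * (adjoint (V j) * V i) * V j := by noncomm_ring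
        _ = adjoint (V i) * (c • (V i * adjoint (V j))) * V j := by
            rw [rel2 hz1 hV hij]
        _ = c • (adjoint (V i) * V i * (adjoint (V j) * V j)) := by
            rw [mul_smul_comm, smul_mul_assoc]; congr 1
        _ = c • 1 := by rw [hV.1 i, one_mul, hV.1 j]
    have t4 : adjoint (V i) * adjoint (V j) * (V j * V i) = 1 := by
      calc adjoint (V i) * adjoint (V j) * (V j * V i)
          = adjoint (V i) * (adjoint (V j) * V j) * V i := by noncomm_ring
        _ = 1 := by rw [hV.1 j, mul_one, hV.1 i]
    rw [t1, t2, t3, t4, smul_smul]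
    rw [smul_smul]
    have hc1 : c * (starRingEnd ℂ) c = 1 := hcc
    have hc2 : (starRingEnd ℂ) c * c = 1 := by rw [mul_comm]; exact hcc
    rw [hc1, hc2]
    simp
  have := sub_eq_zero.mp hTz
  exact this

end DNC


lemma mem_Huni' {S : H →L[ℂ] H} {x : H} : x ∈ Huni S ↔ ∀ k : ℕ, ∃ y, (S ^ k) y = x := by
  simp [Huni, Submodule.mem_iInf, LinearMap.mem_range, Module.End.coe_pow]

lemma mul_pow_rel {A B : H →L[ℂ] H} {c : ℂ} (h : A * B = c • (B * A)) (k : ℕ) :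
    A * B ^ k = c ^ k • (B ^ k * A) := by
  induction k with
  | zero => simp
  | succ k ih =>
    rw [pow_succ', ← mul_assoc, h, smul_mul_assoc, mul_assoc, ih, mul_smul_comm, smul_smul,
      ← mul_assoc, ← pow_succ', ← pow_succ']

/-- if `A * B^k = c_k • (B^k * A)` for scalars then `A` preserves `Huni B` -/
lemma huni_mem_rel {A B : H →L[ℂ] H} (h : ∀ k : ℕ, ∃ c : ℂ, A * B ^ k = c • (B ^ k * A)) :
    ∀ x ∈ Huni B, A x ∈ Huni B := by
  intro x hx
  rw [mem_Huni'] at hx ⊢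
  intro k
  rcases hx k with ⟨y, rfl⟩
  rcases h k with ⟨c, hc⟩
  have := congrArg (fun T => T y) hc
  simp only [ContinuousLinearMap.mul_apply, ContinuousLinearMap.smul_apply,
    ContinuousLinearMap.coe_smul', Pi.smul_apply] at this
  refine ⟨c • (A y), ?_⟩
  rw [map_smul]
  exact this.symm

lemma huni_mem_of_commute {B T : H →L[ℂ] H} (h : Commute T B) :
    ∀ x ∈ Huni B, T x ∈ Huni B :=
  huni_mem_rel (fun k => ⟨1, by rw [one_smul, (h.pow_right k).eq]⟩)

lemma orth_inv {K : Submodule ℂ H} {T : H →L[ℂ] H} (hT : ∀ x ∈ K, adjoint T x ∈ K) :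
    ∀ x ∈ Kᗮ, T x ∈ Kᗮ := by
  intro x hx
  rw [Submodule.mem_orthogonal]
  intro u hu
  rw [← adjoint_inner_left]
  exact Submodule.mem_orthogonal _ _ |>.mp hx _ (hT u hu)

lemma le_huni_of_unitary {B : H →L[ℂ] H} {M : Submodule ℂ H} (hM : Submodule.map (B : H →ₗ[ℂ] H) M = M) :
    M ≤ Huni B := by
  intro x hx
  have key : ∀ k : ℕ, ∃ y ∈ M, (B ^ k) y = x := by
    intro k
    induction k with
    | zero => exact ⟨x, hx, by simp⟩
    | succ k ih =>
      rcases ih with ⟨y, hyM, hy⟩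
      have : y ∈ Submodule.map (B : H →ₗ[ℂ] H) M := hM.symm ▸ hyM
      rcases this with ⟨w, hwM, hw⟩
      refine ⟨w, hwM, ?_⟩
      rw [pow_succ, ContinuousLinearMap.mul_apply, show B w = y from hw, hy]
  rw [mem_Huni']
  intro k
  rcases key k with ⟨y, _, hy⟩
  exact ⟨y, hy⟩


/-- product over a list of pairwise-commuting orthogonal projections -/
lemma isOrthoProj_list (l : List ((H →L[ℂ] H) × Submodule ℂ H))
    (h : ∀ p ∈ l, IsOrthoProj p.1 p.2)
    (hc : ∀ p ∈ l, ∀ q ∈ l, Commute p.1 q.1) :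
    IsOrthoProj (l.map Prod.fst).prod (⨅ p ∈ l, p.2) := by
  induction l with
  | nil =>
    simpa using IsOrthoProj.top
  | cons a t ih =>
    have ht : IsOrthoProj (t.map Prod.fst).prod (⨅ p ∈ t, p.2) :=
      ih (fun p hp => h p (List.mem_cons_of_mem a hp))
        (fun p hp q hq => hc p (List.mem_cons_of_mem a hp) q (List.mem_cons_of_mem a hq))
    have hcomm : Commute a.1 (t.map Prod.fst).prod := by
      apply Commute.list_prod_right
      intro y hy
      rcases List.mem_map.mp hy with ⟨p, hp, rfl⟩
      exact hc a (List.mem_cons_self) p (List.mem_cons_of_mem a hp)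
    have := (h a (List.mem_cons_self)).mul ht hcomm
    have heq : (⨅ p ∈ (a :: t), p.2) = a.2 ⊓ ⨅ p ∈ t, p.2 := by
      apply le_antisymm
      · apply le_inf
        · exact iInf₂_le a (List.mem_cons_self)
        · exact le_iInf₂ fun p hp => iInf₂_le p (List.mem_cons_of_mem a hp)
      · refine le_iInf₂ fun p hp => ?_
        rcases List.mem_cons.mp hp with rfl | hp
        · exact inf_le_left
        · exact le_trans inf_le_right (iInf₂_le p hp)
    rw [List.map_cons, List.prod_cons, heq]
    exact this

/-- bridge: list product over sort equals noncommProd -/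
lemma sort_prod_eq_noncommProd {n : ℕ} (A : Finset (Fin n)) (f : Fin n → H →L[ℂ] H)
    (hcomm : (A : Set (Fin n)).Pairwise fun i j => Commute (f i) (f j)) :
    ((A.sort (· ≤ ·)).map f).prod = A.noncommProd f hcomm := by
  have key : ∀ (s : Multiset (H →L[ℂ] H)) (hs : {x | x ∈ s}.Pairwise Commute),
      s = (((A.sort (· ≤ ·)).map f : List (H →L[ℂ] H)) : Multiset (H →L[ℂ] H)) →
      Multiset.noncommProd s hs = ((A.sort (· ≤ ·)).map f).prod := by
    intro s hs heq
    subst heq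
    exact Multiset.noncommProd_coe _ _
  rw [Finset.noncommProd]
  refine (key _ _ ?_).symm
  rw [← Multiset.map_coe, Finset.sort_eq]

section SUM
variable {n : ℕ} (p q : Fin n → H →L[ℂ] H)

lemma sum_F (hcpp : ∀ i j, Commute (p i) (p j)) (hcpq : ∀ i j, Commute (p i) (q j))
    (hcqq : ∀ i j, Commute (q i) (q j)) (hpq : ∀ i, p i + q i = 1) (s : Finset (Fin n)) :
    ∑ A ∈ s.powerset,
      (A.noncommProd p (fun i _ j _ _ => hcpp i j)) *
        ((s \ A).noncommProd q (fun i _ j _ _ => hcqq i j)) = 1 := by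
  induction s using Finset.induction_on with
  | empty => simp; exact Finset.noncommProd_empty _ _
  | @insert a s ha ih =>
    rw [Finset.sum_powerset_insert ha]
    have key1 : ∀ A ∈ s.powerset,
        (A.noncommProd p (fun i _ j _ _ => hcpp i j)) *
          ((insert a s \ A).noncommProd q (fun i _ j _ _ => hcqq i j)) =
        q a * ((A.noncommProd p (fun i _ j _ _ => hcpp i j)) *
          ((s \ A).noncommProd q (fun i _ j _ _ => hcqq i j))) := by
      intro A hA
      have hAs : A ⊆ s := Finset.mem_powerset.mp hA
      have haA : a ∉ A := fun h => ha (hAs h)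
      have hsd : insert a s \ A = insert a (s \ A) := Finset.insert_sdiff_of_notMem _ haA
      have haD : a ∉ s \ A := fun h => ha (Finset.mem_sdiff.mp h).1
      rw [Finset.noncommProd_congr hsd (fun x _ => rfl) (fun i _ j _ _ => hcqq i j)]
      erw [Finset.noncommProd_insert_of_notMem _ _ _ _ haD]
      have hcm : Commute (q a) (A.noncommProd p (fun i _ j _ _ => hcpp i j)) :=
        Finset.noncommProd_commute _ _ _ _ (fun x _ => (hcpq x a).symm)
      rw [← mul_assoc, ← hcm.eq, mul_assoc]
    have key2 : ∀ A ∈ s.powerset,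
        ((insert a A).noncommProd p (fun i _ j _ _ => hcpp i j)) *
          ((insert a s \ insert a A).noncommProd q (fun i _ j _ _ => hcqq i j)) =
        p a * ((A.noncommProd p (fun i _ j _ _ => hcpp i j)) *
          ((s \ A).noncommProd q (fun i _ j _ _ => hcqq i j))) := by
      intro A hA
      have hAs : A ⊆ s := Finset.mem_powerset.mp hA
      have haA : a ∉ A := fun h => ha (hAs h)
      have hsd : insert a s \ insert a A = s \ A := by
        ext i
        simp only [Finset.mem_sdiff, Finset.mem_insert]
        constructor
        · rintro ⟨h1 | h1, h2⟩
          · exact absurd (Or.inl h1) h2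
          · exact ⟨h1, fun h3 => h2 (Or.inr h3)⟩
        · rintro ⟨h1, h2⟩
          exact ⟨Or.inr h1, fun h3 => h3.elim (fun h4 => ha (h4 ▸ h1)) h2⟩
      rw [Finset.noncommProd_congr hsd (fun x _ => rfl) (fun i _ j _ _ => hcqq i j)]
      erw [Finset.noncommProd_insert_of_notMem _ _ _ _ haA, mul_assoc]
    rw [Finset.sum_congr rfl key1, Finset.sum_congr rfl key2, ← Finset.sum_add_distrib]
    have : ∀ A ∈ s.powerset,
        q a * ((A.noncommProd p (fun i _ j _ _ => hcpp i j)) *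
          ((s \ A).noncommProd q (fun i _ j _ _ => hcqq i j))) +
        p a * ((A.noncommProd p (fun i _ j _ _ => hcpp i j)) *
          ((s \ A).noncommProd q (fun i _ j _ _ => hcqq i j))) =
        (A.noncommProd p (fun i _ j _ _ => hcpp i j)) *
          ((s \ A).noncommProd q (fun i _ j _ _ => hcqq i j)) := by
      intro A hA
      rw [← add_mul]
      have : q a + p a = 1 := by rw [add_comm]; exact hpq a
      rw [this, one_mul]
    rw [Finset.sum_congr rfl this, ih]

end SUM


theorem statement11 {n : ℕ} (hn : 1 ≤ n) (z : Fin n → Fin n → ℂ)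
    (hz1 : ∀ i j, i ≠ j → ‖z i j‖ = 1)
    (hz2 : ∀ i j, i ≠ j → z j i = (starRingEnd ℂ) (z i j))
    (V : Fin n → H →L[ℂ] H) (hV : DoublyNonCommuting z V)
    (Piso Puni : Fin n → H →L[ℂ] H)
    (hPiso : ∀ i, IsOrthoProj (Piso i) (Hiso (V i)))
    (hPuni : ∀ i, IsOrthoProj (Puni i) (Huni (V i))) :
    (∀ i j, Commute (Piso i) (Piso j) ∧ Commute (Piso i) (Puni j) ∧
        Commute (Puni i) (Puni j)) ∧
    (∀ i j, Commute (Piso i) (V j) ∧ Commute (Piso i) (adjoint (V j)) ∧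
        Commute (Puni i) (V j) ∧ Commute (Puni i) (adjoint (V j))) ∧
    (∀ A : Finset (Fin n), LinearMap.range (PA Piso Puni A : H →ₗ[ℂ] H) = HA V A) ∧
    (∀ A B : Finset (Fin n), A ≠ B → HA V A ≤ (HA V B)ᗮ) ∧
    (⨆ A : Finset (Fin n), HA V A) = ⊤ ∧
    (∀ (A : Finset (Fin n)) (i : Fin n), Reduces (V i) (HA V A)) ∧
    (∀ A : Finset (Fin n), ∀ i ∈ A, PureOn (V i) (HA V A)) ∧
    (∀ A : Finset (Fin n), ∀ i ∉ A, UnitaryOn (V i) (HA V A)) ∧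
    (∀ L : Submodule ℂ H, IsClosed (L : Set H) → (∀ i, Reduces (V i) L) →
      ∀ A : Finset (Fin n), ∀ PL : H →L[ℂ] H, IsOrthoProj PL L →
        [(∀ i ∈ A, PureOn (V i) L) ∧ ∀ i ∉ A, UnitaryOn (V i) L,
          L ≤ HA V A,
          PL * PA Piso Puni A = PL].TFAE) := by
  classical
  -- ### invariance of the unitary parts
  have hredV : ∀ i j : Fin n, ∀ x ∈ Huni (V i), V j x ∈ Huni (V i) := by
    intro i j
    by_cases hij : j = i
    · subst hij; exact huni_mem_of_commute (Commute.refl _)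
    · exact huni_mem_rel fun k => ⟨(z j i) ^ k, mul_pow_rel (rel3 hz1 hV hij) k⟩
  have hredVa : ∀ i j : Fin n, ∀ x ∈ Huni (V i), adjoint (V j) x ∈ Huni (V i) := by
    intro i j
    by_cases hij : i = j
    · subst hij
      intro x hx
      rw [mem_Huni'] at hx ⊢
      intro k
      rcases hx (k + 1) with ⟨y, rfl⟩
      refine ⟨y, ?_⟩
      have h1 : (V i ^ (k + 1)) y = V i ((V i ^ k) y) := by
        rw [pow_succ']; rfl
      rw [h1]
      have h2 := congrArg (fun T : H →L[ℂ] H => T ((V i ^ k) y)) (hV.1 i)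
      simpa using h2.symm
    · exact huni_mem_rel fun k => ⟨(z i j) ^ k, mul_pow_rel (rel2 hz1 hV hij) k⟩
  have hredIso : ∀ i j : Fin n, ∀ x ∈ Hiso (V i), V j x ∈ Hiso (V i) := by
    intro i j x hx
    rw [← huni_orth (hV.1 i)] at hx ⊢
    exact orth_inv (hredVa i j) x hx
  have hredIsoA : ∀ i j : Fin n, ∀ x ∈ Hiso (V i), adjoint (V j) x ∈ Hiso (V i) := by
    intro i j x hx
    rw [← huni_orth (hV.1 i)] at hx ⊢
    refine orth_inv (fun y hy => ?_) x hx
    rw [adjoint_adjoint]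
    exact hredV i j y hy
  -- ### commutation of the projections with everything
  have hcPV : ∀ i j, Commute (Puni i) (V j) := fun i j =>
    (hPuni i).commute (hredV i j) (hredVa i j)
  have hcPVa : ∀ i j, Commute (Puni i) (adjoint (V j)) := fun i j =>
    (hPuni i).commute (hredVa i j) (by
      intro x hx
      rw [adjoint_adjoint]
      exact hredV i j x hx)
  have hPuniPres : ∀ i j, ∀ x ∈ Huni (V i), Puni j x ∈ Huni (V i) := fun i j =>
    huni_mem_of_commute (hcPV j i)
  have hcQQ : ∀ i j, Commute (Puni i) (Puni j) := fun i j =>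
    (hPuni i).commute (hPuniPres i j) (by
      intro x hx
      rw [(hPuni j).adjoint_eq]
      exact hPuniPres i j x hx)
  have hPisoEq : ∀ i, Piso i = 1 - Puni i := by
    intro i
    have h1 : IsOrthoProj (1 - Puni i) ((Huni (V i))ᗮ) := (hPuni i).one_sub
    rw [huni_orth (hV.1 i)] at h1
    exact (hPiso i).unique h1
  have hcPP : ∀ i j, Commute (Piso i) (Piso j) := by
    intro i j
    rw [hPisoEq i, hPisoEq j]
    exact ((Commute.one_right _).sub_right ((Commute.one_left _).sub_left (hcQQ i j)))
  have hcPQ : ∀ i j, Commute (Piso i) (Puni j) := by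
    intro i j
    rw [hPisoEq i]
    exact (Commute.one_left _).sub_left (hcQQ i j)
  have hcPisoV : ∀ i j, Commute (Piso i) (V j) := by
    intro i j
    rw [hPisoEq i]
    exact (Commute.one_left _).sub_left (hcPV i j)
  have hcPisoVa : ∀ i j, Commute (Piso i) (adjoint (V j)) := by
    intro i j
    rw [hPisoEq i]
    exact (Commute.one_left _).sub_left (hcPVa i j)
  -- ### `P_A` is the orthogonal projection onto `H_A`
  have hPA : ∀ A : Finset (Fin n), IsOrthoProj (PA Piso Puni A) (HA V A) := by
    intro A
    set l : List ((H →L[ℂ] H) × Submodule ℂ H) :=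
      (A.sort (· ≤ ·)).map (fun i => (Piso i, Hiso (V i))) ++
        ((Aᶜ).sort (· ≤ ·)).map (fun i => (Puni i, Huni (V i))) with hl
    have hmem : ∀ p ∈ l, IsOrthoProj p.1 p.2 := by
      intro p hp
      rcases List.mem_append.mp hp with h | h
      · rcases List.mem_map.mp h with ⟨i, _, rfl⟩; exact hPiso i
      · rcases List.mem_map.mp h with ⟨i, _, rfl⟩; exact hPuni i
    have hcomm : ∀ p ∈ l, ∀ q ∈ l, Commute p.1 q.1 := by
      intro p hp q hq
      rcases List.mem_append.mp hp with h | h <;>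
        rcases List.mem_append.mp hq with h' | h' <;>
        [rcases List.mem_map.mp h with ⟨i, _, rfl⟩;
         rcases List.mem_map.mp h with ⟨i, _, rfl⟩;
         rcases List.mem_map.mp h with ⟨i, _, rfl⟩;
         rcases List.mem_map.mp h with ⟨i, _, rfl⟩] <;>
        [rcases List.mem_map.mp h' with ⟨j, _, rfl⟩;
         rcases List.mem_map.mp h' with ⟨j, _, rfl⟩;
         rcases List.mem_map.mp h' with ⟨j, _, rfl⟩;
         rcases List.mem_map.mp h' with ⟨j, _, rfl⟩]
      · exact hcPP i j
      · exact hcPQ i j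
      · exact (hcPQ j i).symm
      · exact hcQQ i j
    have h0 := isOrthoProj_list l hmem hcomm
    have hprod : (l.map Prod.fst).prod = PA Piso Puni A := by
      rw [hl, List.map_append, List.map_map, List.map_map, List.prod_append]
      rfl
    have hinf : (⨅ p ∈ l, p.2) = HA V A := by
      ext x
      simp only [Submodule.mem_iInf]
      constructor
      · intro h
        refine Submodule.mem_inf.mpr ⟨(Submodule.mem_iInf _).mpr fun i => (Submodule.mem_iInf _).mpr
            fun hi => ?_, (Submodule.mem_iInf _).mpr fun i => (Submodule.mem_iInf _).mpr fun hi => ?_⟩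
        · exact h (Piso i, Hiso (V i)) (List.mem_append.mpr (Or.inl
            (List.mem_map.mpr ⟨i, (Finset.mem_sort _).mpr hi, rfl⟩)))
        · exact h (Puni i, Huni (V i)) (List.mem_append.mpr (Or.inr
            (List.mem_map.mpr ⟨i, (Finset.mem_sort _).mpr hi, rfl⟩)))
      · intro h p hp
        rcases Submodule.mem_inf.mp h with ⟨h1, h2⟩
        rcases List.mem_append.mp hp with hh | hh
        · rcases List.mem_map.mp hh with ⟨i, hi, rfl⟩
          exact (Submodule.mem_iInf _).mp ((Submodule.mem_iInf _).mp h1 i) ((Finset.mem_sort _).mp hi)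
        · rcases List.mem_map.mp hh with ⟨i, hi, rfl⟩
          exact (Submodule.mem_iInf _).mp ((Submodule.mem_iInf _).mp h2 i) ((Finset.mem_sort _).mp hi)
    rw [hprod, hinf] at h0
    exact h0
  have hHAiso : ∀ (A : Finset (Fin n)) {i}, i ∈ A → HA V A ≤ Hiso (V i) := by
    intro A i hi
    exact le_trans inf_le_left (iInf₂_le i hi)
  have hHAuni : ∀ (A : Finset (Fin n)) {i}, i ∉ A → HA V A ≤ Huni (V i) := by
    intro A i hi
    exact le_trans inf_le_right (iInf₂_le i (Finset.mem_compl.mpr hi))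
  have hHAmem : ∀ (A : Finset (Fin n)) (x : H), (∀ i ∈ A, x ∈ Hiso (V i)) →
      (∀ i ∉ A, x ∈ Huni (V i)) → x ∈ HA V A := by
    intro A x h1 h2
    refine Submodule.mem_inf.mpr ⟨(Submodule.mem_iInf _).mpr fun i => (Submodule.mem_iInf _).mpr
      fun hi => h1 i hi, (Submodule.mem_iInf _).mpr fun i => (Submodule.mem_iInf _).mpr fun hi =>
      h2 i (Finset.mem_compl.mp hi)⟩
  -- ### the reduction property
  have hreduce : ∀ (A : Finset (Fin n)) (i : Fin n), Reduces (V i) (HA V A) := by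
    intro A i
    constructor
    · intro x hx
      refine hHAmem A _ (fun j hj => hredIso j i x (hHAiso A hj hx))
        (fun j hj => hredV j i x (hHAuni A hj hx))
    · intro x hx
      refine hHAmem A _ (fun j hj => hredIsoA j i x (hHAiso A hj hx))
        (fun j hj => hredVa j i x (hHAuni A hj hx))
  -- ### unitarity helper : `V i (V i)* x = x` on the range of `V i`
  have hVVa : ∀ (i : Fin n) (x : H), x ∈ Huni (V i) → V i (adjoint (V i) x) = x := by
    intro i x hx
    rcases mem_Huni'.mp hx 1 with ⟨w, hw⟩
    rw [pow_one] at hw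
    rw [← hw]
    have := congrArg (fun T : H →L[ℂ] H => T w) (hV.1 i)
    simp only [ContinuousLinearMap.mul_apply, ContinuousLinearMap.one_apply] at this
    rw [this]
  refine ⟨fun i j => ⟨hcPP i j, hcPQ i j, hcQQ i j⟩,
    fun i j => ⟨hcPisoV i j, hcPisoVa i j, hcPV i j, hcPVa i j⟩,
    fun A => (hPA A).range_eq, ?_, ?_, hreduce, ?_, ?_, ?_⟩
  -- ### mutual orthogonality
  · intro A B hAB
    have : ∃ i, (i ∈ A ∧ i ∉ B) ∨ (i ∈ B ∧ i ∉ A) := by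
      by_contra hc
      push_neg at hc
      apply hAB
      ext i
      rcases hc i with ⟨h1, h2⟩
      exact ⟨h1, h2⟩
    rcases this with ⟨i, ⟨hiA, hiB⟩ | ⟨hiB, hiA⟩⟩
    · intro x hx
      rw [Submodule.mem_orthogonal]
      intro u hu
      have hxi : x ∈ (Huni (V i))ᗮ := by
        rw [huni_orth (hV.1 i)]
        exact hHAiso A hiA hx
      exact Submodule.mem_orthogonal _ _ |>.mp hxi _ (hHAuni B hiB hu)
    · intro x hx
      rw [Submodule.mem_orthogonal]
      intro u hu
      have hui : u ∈ (Huni (V i))ᗮ := by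
        rw [huni_orth (hV.1 i)]
        exact hHAiso B hiB hu
      have := Submodule.mem_orthogonal _ _ |>.mp hui _ (hHAuni A hiA hx)
      rw [inner_eq_zero_symm] at this
      exact this
  -- ### completeness of the decomposition
  · rw [eq_top_iff]
    intro x _
    have hsum := sum_F Piso Puni hcPP hcPQ hcQQ
      (fun i => by rw [hPisoEq i]; abel) (Finset.univ : Finset (Fin n))
    have hPAform : ∀ A : Finset (Fin n), PA Piso Puni A =
        (A.noncommProd Piso (fun i _ j _ _ => hcPP i j)) *
          ((Finset.univ \ A).noncommProd Puni (fun i _ j _ _ => hcQQ i j)) := by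
      intro A
      rw [PA, sort_prod_eq_noncommProd A Piso (fun i _ j _ _ => hcPP i j),
        sort_prod_eq_noncommProd (Aᶜ) Puni (fun i _ j _ _ => hcQQ i j)]
      congr 1
    have hxx : x = ∑ A ∈ (Finset.univ : Finset (Fin n)).powerset, (PA Piso Puni A) x := by
      have h1 := congrArg (fun T : H →L[ℂ] H => T x) hsum
      simp only [ContinuousLinearMap.one_apply] at h1
      rw [ContinuousLinearMap.sum_apply] at h1
      refine (Eq.trans (Finset.sum_congr rfl fun A _ => ?_) h1).symm
      rw [hPAform A]
    rw [hxx]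
    apply Submodule.sum_mem
    intro A _
    exact le_iSup (fun A => HA V A) A ((hPA A x).1)
  -- ### pure on `H_A` for `i ∈ A`
  · intro A i hi M hMc hML hMV
    rw [Submodule.eq_bot_iff]
    intro x hx
    have hxu : x ∈ Huni (V i) := le_huni_of_unitary hMV hx
    have hxi : x ∈ (Huni (V i))ᗮ := by
      rw [huni_orth (hV.1 i)]
      exact hHAiso A hi (hML hx)
    have := Submodule.mem_orthogonal _ _ |>.mp hxi _ hxu
    exact inner_self_eq_zero.mp this
  -- ### unitary on `H_A` for `i ∉ A`
  · intro A i hi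
    apply le_antisymm
    · rintro _ ⟨y, hy, rfl⟩
      exact (hreduce A i).1 y hy
    · intro x hx
      refine Submodule.mem_map.mpr ⟨adjoint (V i) x, (hreduce A i).2 x hx, ?_⟩
      exact hVVa i x (hHAuni A hi hx)
  -- ### the TFAE
  · intro L hLc hLred A PL hPL
    tfae_have 2 → 3 := by
      intro h2
      ext x
      show PL ((PA Piso Puni A) x) = PL x
      have hperp : x - (PA Piso Puni A) x ∈ (HA V A)ᗮ := (hPA A x).2
      have h0 : PL (x - (PA Piso Puni A) x) = 0 :=
        hPL.kill (Submodule.orthogonal_le h2 hperp)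
      rw [map_sub] at h0
      exact (sub_eq_zero.mp h0).symm
    tfae_have 3 → 2 := by
      intro h3 x hx
      have h4 : PA Piso Puni A * PL = PL := by
        have := congrArg star h3
        rw [star_mul] at this
        simp only [star_eq_adjoint] at this
        rw [(hPA A).adjoint_eq, hPL.adjoint_eq] at this
        exact this
      have h5 := congrArg (fun T : H →L[ℂ] H => T x) h4
      simp only [ContinuousLinearMap.mul_apply] at h5
      rw [hPL.fix hx] at h5
      rw [← h5]
      exact (hPA A _).1
    tfae_have 2 → 1 := by
      intro h2
      constructor
      · intro i hi M hMc hML hMV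
        rw [Submodule.eq_bot_iff]
        intro x hx
        have hxu : x ∈ Huni (V i) := le_huni_of_unitary hMV hx
        have hxi : x ∈ (Huni (V i))ᗮ := by
          rw [huni_orth (hV.1 i)]
          exact hHAiso A hi (h2 (hML hx))
        have := Submodule.mem_orthogonal _ _ |>.mp hxi _ hxu
        exact inner_self_eq_zero.mp this
      · intro i hi
        apply le_antisymm
        · rintro _ ⟨y, hy, rfl⟩
          exact (hLred i).1 y hy
        · intro x hx
          refine Submodule.mem_map.mpr ⟨adjoint (V i) x, (hLred i).2 x hx, ?_⟩
          exact hVVa i x (hHAuni A hi (h2 hx))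
    tfae_have 1 → 2 := by
      intro h1 x hx
      refine hHAmem A x (fun i hi => ?_) (fun i hi => le_huni_of_unitary (h1.2 i hi) hx)
      -- pure case : `x ∈ Hiso (V i)`
      set M := L ⊓ Huni (V i) with hM
      have hMc : IsClosed (M : Set H) := by
        have : (M : Set H) = (L : Set H) ∩ (Huni (V i) : Set H) := rfl
        rw [this]
        exact hLc.inter (huni_closed (V i) (fun k => range_pow_closed (hV.1 i) k))
      have hMap : Submodule.map (V i : H →ₗ[ℂ] H) M = M := by
        apply le_antisymm
        · rintro _ ⟨y, hy, rfl⟩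
          rcases Submodule.mem_inf.mp hy with ⟨hyL, hyU⟩
          exact Submodule.mem_inf.mpr ⟨(hLred i).1 y hyL, hredV i i y hyU⟩
        · intro y hy
          rcases Submodule.mem_inf.mp hy with ⟨hyL, hyU⟩
          refine Submodule.mem_map.mpr ⟨adjoint (V i) y,
            Submodule.mem_inf.mpr ⟨(hLred i).2 y hyL, hredVa i i y hyU⟩, hVVa i y hyU⟩
      have hM0 : M = ⊥ := h1.1 i hi M hMc inf_le_left hMap
      have hcPLV : Commute PL (V i) := hPL.commute (hLred i).1 (hLred i).2
      have hPLpres : ∀ y ∈ Huni (V i), PL y ∈ Huni (V i) := huni_mem_of_commute hcPLV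
      have hcomm : Commute (Puni i) PL := (hPuni i).commute hPLpres (by
        intro y hy
        rw [hPL.adjoint_eq]
        exact hPLpres y hy)
      have hPx : Puni i x ∈ L := by
        have h5 := congrArg (fun T : H →L[ℂ] H => T x) hcomm.eq
        simp only [ContinuousLinearMap.mul_apply] at h5
        rw [hPL.fix hx] at h5
        rw [h5]
        exact hPL.mem _
      have hPM : Puni i x ∈ M := Submodule.mem_inf.mpr ⟨hPx, (hPuni i).mem x⟩
      rw [hM0, Submodule.mem_bot] at hPM
      have hxperp : x - Puni i x ∈ (Huni (V i))ᗮ := (hPuni i x).2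
      rw [hPM, sub_zero] at hxperp
      rw [← huni_orth (hV.1 i)]
      exact hxperp
    tfae_finish
end
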